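/- Let D be a bounded Lipschitz domain in ℝⁿ. Then there exists κ > 0 such that d_g^D(x,y) ≤ κ|x - y| for all x, y ∈ D, where d_g^D is the geodesic distance in D. -/

import Mathlib

open Set intervalIntegral

/-- Length of a path: `ℓ(ψ) = ∫₀¹ |ψ̇(t)| dt`. -/
noncomputable def pathLen {n : ℕ} (ψ : ℝ → EuclideanSpace ℝ (Fin n)) : ℝ :=
  ∫ t in (0 : ℝ)..1, ‖deriv ψ t‖

/-- The geodesic distance in `D`: infimum of lengths of Lipschitz paths inside `D`
joining `x` to `y`. -/
noncomputable def geodDist {n : ℕ} (D : Set (EuclideanSpace ℝ (Fin n)))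
    (x y : EuclideanSpace ℝ (Fin n)) : ℝ :=
  sInf {L : ℝ | ∃ ψ : ℝ → EuclideanSpace ℝ (Fin n), (∃ K : NNReal, LipschitzWith K ψ) ∧
    ψ 0 = x ∧ ψ 1 = y ∧ (∀ t ∈ Icc (0 : ℝ) 1, ψ t ∈ D) ∧ L = pathLen ψ}

section GeodAux
open MeasureTheory
variable {n : ℕ}


lemma norm_deriv_le' {ψ : ℝ → EuclideanSpace ℝ (Fin n)} {K : NNReal}
    (h : LipschitzWith K ψ) (t : ℝ) : ‖deriv ψ t‖ ≤ K := by
  have h1 : ‖deriv ψ t‖ = ‖fderiv ℝ ψ t 1‖ := by rw [fderiv_apply_one_eq_deriv]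
  calc ‖deriv ψ t‖ = ‖fderiv ℝ ψ t 1‖ := h1
    _ ≤ ‖fderiv ℝ ψ t‖ * ‖(1:ℝ)‖ := (fderiv ℝ ψ t).le_opNorm 1
    _ ≤ (K : ℝ) * 1 := by
        gcongr
        · exact norm_fderiv_le_of_lipschitz ℝ h
        · simp
    _ = K := mul_one _

lemma intInt_norm_deriv {ψ : ℝ → EuclideanSpace ℝ (Fin n)} {K : NNReal}
    (h : LipschitzWith K ψ) :
    IntervalIntegrable (fun t => ‖deriv ψ t‖) volume 0 1 := by
  refine (_root_.intervalIntegrable_const (c := (K:ℝ))).mono_fun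
    (measurable_deriv ψ).norm.aestronglyMeasurable ?_
  · filter_upwards with t
    simpa [abs_of_nonneg, norm_nonneg] using norm_deriv_le' h t

lemma pathLen_le {ψ : ℝ → EuclideanSpace ℝ (Fin n)} {K : NNReal}
    (h : LipschitzWith K ψ) : pathLen ψ ≤ K := by
  have h2 : pathLen ψ ≤ ∫ _t in (0:ℝ)..1, (K:ℝ) :=
    intervalIntegral.integral_mono_on zero_le_one (intInt_norm_deriv h)
      _root_.intervalIntegrable_const (fun t _ => norm_deriv_le' h t)
  simpa using h2

lemma pathLen_nonneg (ψ : ℝ → EuclideanSpace ℝ (Fin n)) : 0 ≤ pathLen ψ :=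
  intervalIntegral.integral_nonneg zero_le_one (fun t _ => norm_nonneg _)

/-- An admissible Lipschitz path in `D` from `x` to `y` with Lipschitz constant `≤ K`. -/
def AdmPath {n : ℕ} (D : Set (EuclideanSpace ℝ (Fin n)))
    (x y : EuclideanSpace ℝ (Fin n)) (K : ℝ) : Prop :=
  ∃ ψ : ℝ → EuclideanSpace ℝ (Fin n), ∃ Kn : NNReal, LipschitzWith Kn ψ ∧ (Kn : ℝ) ≤ K ∧
    ψ 0 = x ∧ ψ 1 = y ∧ ∀ t ∈ Icc (0:ℝ) 1, ψ t ∈ D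

lemma AdmPath.nonneg {D : Set (EuclideanSpace ℝ (Fin n))} {x y : EuclideanSpace ℝ (Fin n)}
    {K : ℝ} (h : AdmPath D x y K) : 0 ≤ K := by
  obtain ⟨ψ, Kn, _, hK, _⟩ := h
  exact le_trans (Kn.coe_nonneg) hK

lemma geodDist_le_admPath {D : Set (EuclideanSpace ℝ (Fin n))}
    {x y : EuclideanSpace ℝ (Fin n)} {K : ℝ} (h : AdmPath D x y K) :
    geodDist D x y ≤ K := by
  obtain ⟨ψ, Kn, hl, hK, h0, h1, hmem⟩ := h
  have hbdd : BddBelow {L : ℝ | ∃ ψ : ℝ → EuclideanSpace ℝ (Fin n),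
      (∃ K : NNReal, LipschitzWith K ψ) ∧
      ψ 0 = x ∧ ψ 1 = y ∧ (∀ t ∈ Icc (0 : ℝ) 1, ψ t ∈ D) ∧ L = pathLen ψ} := by
    refine ⟨0, fun L hL => ?_⟩
    obtain ⟨ψ', _, _, _, _, hL⟩ := hL
    rw [hL]; exact pathLen_nonneg ψ'
  have hmemset : pathLen ψ ∈ {L : ℝ | ∃ ψ : ℝ → EuclideanSpace ℝ (Fin n),
      (∃ K : NNReal, LipschitzWith K ψ) ∧
      ψ 0 = x ∧ ψ 1 = y ∧ (∀ t ∈ Icc (0 : ℝ) 1, ψ t ∈ D) ∧ L = pathLen ψ} :=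
    ⟨ψ, ⟨Kn, hl⟩, h0, h1, hmem, rfl⟩
  exact le_trans (csInf_le hbdd hmemset) (le_trans (pathLen_le hl) hK)

lemma AdmPath.mono {D : Set (EuclideanSpace ℝ (Fin n))} {x y : EuclideanSpace ℝ (Fin n)}
    {K K' : ℝ} (h : AdmPath D x y K) (hK : K ≤ K') : AdmPath D x y K' := by
  obtain ⟨ψ, Kn, hl, hKn, h0, h1, hm⟩ := h
  exact ⟨ψ, Kn, hl, hKn.trans hK, h0, h1, hm⟩

lemma AdmPath.mono_set {D D' : Set (EuclideanSpace ℝ (Fin n))}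
    {x y : EuclideanSpace ℝ (Fin n)} {K : ℝ} (h : AdmPath D' x y K) (hs : D' ⊆ D) :
    AdmPath D x y K := by
  obtain ⟨ψ, Kn, hl, hKn, h0, h1, hm⟩ := h
  exact ⟨ψ, Kn, hl, hKn, h0, h1, fun t ht => hs (hm t ht)⟩

lemma AdmPath.symm {D : Set (EuclideanSpace ℝ (Fin n))} {x y : EuclideanSpace ℝ (Fin n)}
    {K : ℝ} (h : AdmPath D x y K) : AdmPath D y x K := by
  obtain ⟨ψ, Kn, hl, hKn, h0, h1, hm⟩ := h
  have hone : LipschitzWith 1 (fun t : ℝ => 1 - t) := by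
    apply LipschitzWith.of_dist_le_mul
    intro s t
    have e : (1:ℝ) - s - (1 - t) = t - s := by ring
    rw [Real.dist_eq, Real.dist_eq, e, NNReal.coe_one, one_mul, abs_sub_comm]
  refine ⟨fun t => ψ (1 - t), Kn, ?_, hKn, by simpa using h1, by simpa using h0, ?_⟩
  · simpa [Function.comp_def] using hl.comp hone
  · intro t ht
    exact hm (1 - t) ⟨by linarith [ht.2], by linarith [ht.1]⟩

lemma AdmPath.trans {D : Set (EuclideanSpace ℝ (Fin n))} {x y z : EuclideanSpace ℝ (Fin n)}
    {K1 K2 : ℝ} (h1 : AdmPath D x y K1) (h2 : AdmPath D y z K2) :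
    AdmPath D x z (2 * max K1 K2) := by
  obtain ⟨ψ1, L1, hl1, hK1, e10, e11, m1⟩ := h1
  obtain ⟨ψ2, L2, hl2, hK2, e20, e21, m2⟩ := h2
  set ψ : ℝ → EuclideanSpace ℝ (Fin n) :=
    fun t => if t ≤ 1/2 then ψ1 (2*t) else ψ2 (2*t - 1) with hψ
  have key : ∀ s t : ℝ, s ≤ t → dist (ψ s) (ψ t) ≤ (2 * max (L1:ℝ) (L2:ℝ)) * dist s t := by
    intro s t hst
    have hL1 : (L1:ℝ) ≤ max (L1:ℝ) L2 := le_max_left _ _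
    have hL2 : (L2:ℝ) ≤ max (L1:ℝ) L2 := le_max_right _ _
    have hmax0 : (0:ℝ) ≤ max (L1:ℝ) L2 := le_trans L1.coe_nonneg hL1
    rw [Real.dist_eq, abs_of_nonpos (by linarith), neg_sub]
    by_cases hs : s ≤ 1/2
    · by_cases ht : t ≤ 1/2
      · have : ψ s = ψ1 (2*s) := by simp only [hψ]; rw [if_pos hs]
        rw [this]
        have : ψ t = ψ1 (2*t) := by simp only [hψ]; rw [if_pos ht]
        rw [this]
        calc dist (ψ1 (2*s)) (ψ1 (2*t)) ≤ L1 * dist (2*s) (2*t) := hl1.dist_le_mul _ _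
          _ = L1 * (2 * (t - s)) := by
              rw [Real.dist_eq]
              rw [abs_of_nonpos (by linarith), ]
              ring
          _ ≤ (max (L1:ℝ) L2) * (2 * (t - s)) := by
              apply mul_le_mul_of_nonneg_right hL1; linarith
          _ = 2 * max (L1:ℝ) L2 * (t - s) := by ring
      · have hs' : ψ s = ψ1 (2*s) := by simp only [hψ]; rw [if_pos hs]
        have ht' : ψ t = ψ2 (2*t - 1) := by simp only [hψ]; rw [if_neg ht]
        push_neg at ht
        have mid1 : ψ1 1 = y := e11
        have mid2 : ψ2 0 = y := e20
        calc dist (ψ s) (ψ t) ≤ dist (ψ s) y + dist y (ψ t) := dist_triangle _ _ _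
          _ = dist (ψ1 (2*s)) (ψ1 1) + dist (ψ2 0) (ψ2 (2*t-1)) := by
              rw [hs', ht', mid1, mid2]
          _ ≤ L1 * dist (2*s) 1 + L2 * dist 0 (2*t-1) := by
              gcongr
              · exact hl1.dist_le_mul _ _
              · exact hl2.dist_le_mul _ _
          _ = L1 * (1 - 2*s) + L2 * (2*t - 1) := by
              rw [Real.dist_eq, Real.dist_eq, abs_of_nonpos (by linarith), abs_of_nonpos (by linarith)]
              ring
          _ ≤ (max (L1:ℝ) L2) * (1 - 2*s) + (max (L1:ℝ) L2) * (2*t - 1) := by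
              gcongr <;> linarith
          _ = 2 * max (L1:ℝ) L2 * (t - s) := by ring
    · have ht : ¬ t ≤ 1/2 := by push_neg at hs ⊢; linarith
      have hs' : ψ s = ψ2 (2*s - 1) := by simp only [hψ]; rw [if_neg hs]
      have ht' : ψ t = ψ2 (2*t - 1) := by simp only [hψ]; rw [if_neg ht]
      rw [hs', ht']
      calc dist (ψ2 (2*s-1)) (ψ2 (2*t-1)) ≤ L2 * dist (2*s-1) (2*t-1) := hl2.dist_le_mul _ _
        _ = L2 * (2 * (t - s)) := by
            rw [Real.dist_eq, abs_of_nonpos (by linarith)]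
            ring
        _ ≤ (max (L1:ℝ) L2) * (2 * (t - s)) := by
            apply mul_le_mul_of_nonneg_right hL2; linarith
        _ = 2 * max (L1:ℝ) L2 * (t - s) := by ring
  have hlip : LipschitzWith (2 * max L1 L2) ψ := by
    apply LipschitzWith.of_dist_le_mul
    intro s t
    rcases le_total s t with h | h
    · simpa [NNReal.coe_mul, NNReal.coe_max] using key s t h
    · rw [dist_comm (ψ s), dist_comm s]
      simpa [NNReal.coe_mul, NNReal.coe_max] using key t s h
  refine ⟨ψ, 2 * max L1 L2, hlip, ?_, ?_, ?_, ?_⟩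
  · push_cast
    have h1' : (L1:ℝ) ≤ max K1 K2 := hK1.trans (le_max_left _ _)
    have h2' : (L2:ℝ) ≤ max K1 K2 := hK2.trans (le_max_right _ _)
    have : max (L1:ℝ) (L2:ℝ) ≤ max K1 K2 := max_le h1' h2'
    linarith
  · have : ψ 0 = ψ1 0 := by norm_num [hψ]
    rw [this, e10]
  · have : ψ 1 = ψ2 1 := by norm_num [hψ]
    rw [this, e21]
  · intro t ht
    by_cases h : t ≤ 1/2
    · have : ψ t = ψ1 (2*t) := by simp only [hψ]; rw [if_pos h]
      rw [this]
      exact m1 _ ⟨by linarith [ht.1], by linarith⟩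
    · have : ψ t = ψ2 (2*t - 1) := by simp only [hψ]; rw [if_neg h]
      rw [this]
      push_neg at h
      exact m2 _ ⟨by linarith, by linarith [ht.2]⟩

/-- the clamp function -/
noncomputable def clampfn (t : ℝ) : ℝ := ((Set.projIcc (0:ℝ) 1 zero_le_one t : Icc (0:ℝ) 1) : ℝ)

lemma clampfn_lipschitz : LipschitzWith 1 clampfn := by
  have h1 : LipschitzWith 1 (Subtype.val : Icc (0:ℝ) 1 → ℝ) := LipschitzWith.subtype_val _
  have h2 : LipschitzWith 1 (Set.projIcc (0:ℝ) 1 zero_le_one) := LipschitzWith.projIcc _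
  have h3 := h1.comp h2
  rw [one_mul] at h3
  exact h3

lemma clampfn_mem (t : ℝ) : clampfn t ∈ Icc (0:ℝ) 1 := (Set.projIcc (0:ℝ) 1 zero_le_one t).2

lemma clampfn_zero : clampfn 0 = 0 := by simp [clampfn]

lemma clampfn_one : clampfn 1 = 1 := by simp [clampfn]

lemma lineMap_lipschitz (a b : EuclideanSpace ℝ (Fin n)) :
    LipschitzWith ‖b - a‖₊ (fun u : ℝ => a + u • (b - a)) := by
  apply LipschitzWith.of_dist_le_mul
  intro s t
  rw [dist_add_left, dist_eq_norm, ← sub_smul, norm_smul, Real.dist_eq, Real.norm_eq_abs,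
    coe_nnnorm, mul_comm]

/-- The straight segment, clamped, as an admissible path. -/
lemma admPath_segment {D : Set (EuclideanSpace ℝ (Fin n))} {a b : EuclideanSpace ℝ (Fin n)}
    (h : ∀ t ∈ Icc (0:ℝ) 1, a + t • (b - a) ∈ D) :
    AdmPath D a b ‖b - a‖ := by
  refine ⟨fun t => a + (clampfn t) • (b - a), ‖b - a‖₊, ?_, by simp, ?_, ?_, ?_⟩
  · have := (lineMap_lipschitz a b).comp clampfn_lipschitz
    simpa [Function.comp_def] using this
  · show a + (clampfn 0) • (b - a) = a
    rw [clampfn_zero]; simp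
  · show a + (clampfn 1) • (b - a) = b
    rw [clampfn_one]; simp
  · intro t _
    exact h _ (clampfn_mem t)

/-- Path through a bi-Lipschitz chart: image of a segment. -/
lemma admPath_chart {D' Q : Set (EuclideanSpace ℝ (Fin n))}
    {φ : EuclideanSpace ℝ (Fin n) → EuclideanSpace ℝ (Fin n)} {kp : NNReal}
    (hφ : LipschitzOnWith kp φ Q) (hQ : Convex ℝ Q) {a b : EuclideanSpace ℝ (Fin n)}
    (ha : a ∈ Q) (hb : b ∈ Q) (hmaps : MapsTo φ Q D') :
    AdmPath D' (φ a) (φ b) ((kp : ℝ) * ‖b - a‖) := by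
  set c : ℝ → EuclideanSpace ℝ (Fin n) := fun t => a + (clampfn t) • (b - a) with hc
  have hcQ : ∀ t : ℝ, c t ∈ Q := by
    intro t
    have hmem := clampfn_mem t
    have : c t ∈ segment ℝ a b := by
      rw [segment_eq_image']
      exact ⟨clampfn t, hmem, rfl⟩
    exact hQ.segment_subset ha hb this
  have hclip : LipschitzWith ‖b - a‖₊ c := by
    have := (lineMap_lipschitz a b).comp clampfn_lipschitz
    simpa [hc, Function.comp_def] using this
  have hcomp : LipschitzWith (kp * ‖b - a‖₊) (φ ∘ c) := by
    rw [← lipschitzOnWith_univ]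
    exact hφ.comp (hclip.lipschitzOnWith) (fun t _ => hcQ t)
  refine ⟨φ ∘ c, kp * ‖b - a‖₊, hcomp, by push_cast; simp, ?_, ?_, ?_⟩
  · simp [Function.comp, hc, clampfn_zero]
  · simp [Function.comp, hc, clampfn_one]
  · intro t _
    exact hmaps (hcQ t)

end GeodAux

/-- A bounded Lipschitz domain: a bounded open connected set whose boundary is
locally bi-Lipschitz equivalent to a (convex) half-cube. -/
def IsLipschitzDomain {n : ℕ} (D : Set (EuclideanSpace ℝ (Fin n))) : Prop :=
  IsOpen D ∧ IsConnected D ∧ Bornology.IsBounded D ∧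
  ∀ x ∈ frontier D, ∃ U Q : Set (EuclideanSpace ℝ (Fin n)),
    ∃ φ φinv : EuclideanSpace ℝ (Fin n) → EuclideanSpace ℝ (Fin n), ∃ kp km : NNReal,
      IsOpen U ∧ x ∈ U ∧ Convex ℝ Q ∧ LipschitzOnWith kp φ Q ∧
      LipschitzOnWith km φinv (D ∩ U) ∧ Set.BijOn φ Q (D ∩ U) ∧
      ∀ y ∈ D ∩ U, φ (φinv y) = y ∧ φinv y ∈ Q

theorem geodDist_le_const_mul_dist {n : ℕ} (D : Set (EuclideanSpace ℝ (Fin n)))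
    (hD : IsLipschitzDomain D) :
    ∃ κ : ℝ, 0 < κ ∧ ∀ x ∈ D, ∀ y ∈ D, geodDist D x y ≤ κ * ‖x - y‖ := by
  classical
  obtain ⟨hopen, hconn, hbdd, hfront⟩ := hD
  obtain ⟨y₀, hy₀⟩ := hconn.nonempty
  obtain ⟨R, hR⟩ := hbdd.subset_closedBall 0
  have hR0 : 0 ≤ R := le_trans dist_nonneg (hR hy₀)
  have hnorm_le : ∀ y ∈ D, ∀ z ∈ D, ‖z - y‖ ≤ 2 * R := by
    intro y hy z hz
    have h1 : ‖y‖ ≤ R := by simpa [Real.dist_eq, dist_eq_norm] using hR hy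
    have h2 : ‖z‖ ≤ R := by simpa [dist_eq_norm] using hR hz
    calc ‖z - y‖ ≤ ‖z‖ + ‖y‖ := norm_sub_le _ _
      _ ≤ 2 * R := by linarith
  -- good neighborhoods
  have claim : ∀ p : EuclideanSpace ℝ (Fin n), ∃ W : Set (EuclideanSpace ℝ (Fin n)), ∃ K : ℝ,
      IsOpen W ∧ 0 ≤ K ∧ (p ∈ closure D → p ∈ W) ∧
      ∀ y ∈ D ∩ W, ∀ z ∈ D ∩ W, AdmPath D y z (K * ‖z - y‖) := by
    intro p
    by_cases hp : p ∈ closure D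
    · by_cases hpD : p ∈ D
      · obtain ⟨ε, hε0, hball⟩ := Metric.isOpen_iff.1 hopen p hpD
        refine ⟨Metric.ball p ε, 1, Metric.isOpen_ball, zero_le_one, fun _ => Metric.mem_ball_self hε0, ?_⟩
        intro y hy z hz
        have hseg : ∀ t ∈ Icc (0:ℝ) 1, y + t • (z - y) ∈ D := by
          intro t ht
          apply hball
          apply (convex_ball p ε).segment_subset hy.2 hz.2
          rw [segment_eq_image']
          exact ⟨t, ht, rfl⟩
        exact (admPath_segment hseg).mono (by rw [one_mul])
      · have hpf : p ∈ frontier D := by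
          rw [hopen.frontier_eq]; exact ⟨hp, hpD⟩
        obtain ⟨U, Q, φ, φinv, kp, km, hUopen, hpU, hQconv, hφ, hφinv, hbij, hinv⟩ := hfront p hpf
        refine ⟨U, (kp : ℝ) * (km : ℝ), hUopen, by positivity, fun _ => hpU, ?_⟩
        intro y hy z hz
        obtain ⟨hy1, hyQ⟩ := hinv y hy
        obtain ⟨hz1, hzQ⟩ := hinv z hz
        have hpath := admPath_chart hφ hQconv hyQ hzQ
          (hbij.mapsTo.mono_right inter_subset_left)
        rw [hy1, hz1] at hpath
        apply hpath.mono
        have hd : ‖φinv z - φinv y‖ ≤ (km : ℝ) * ‖z - y‖ := by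
          have := hφinv.dist_le_mul z hz y hy
          simpa [dist_eq_norm] using this
        calc (kp : ℝ) * ‖φinv z - φinv y‖ ≤ (kp : ℝ) * ((km : ℝ) * ‖z - y‖) := by
              apply mul_le_mul_of_nonneg_left hd kp.coe_nonneg
          _ = (kp : ℝ) * (km : ℝ) * ‖z - y‖ := by ring
    · exact ⟨∅, 0, isOpen_empty, le_refl _, fun h => absurd h hp, fun y hy => absurd hy.2 (by simp)⟩
  choose W K hWopen hK0 hWmem hWpath using claim
  have hcomp : IsCompact (closure D) := hbdd.isCompact_closure
  have hcover : closure D ⊆ ⋃ p, W p := fun p hp => mem_iUnion.2 ⟨p, hWmem p hp⟩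
  obtain ⟨t, ht⟩ := hcomp.elim_finite_subcover W hWopen hcover
  -- Lebesgue number
  have hcov' : closure D ⊆ ⋃ i : {p // p ∈ t}, W i.1 := by
    intro p hp
    obtain ⟨i, hi, hpi⟩ := mem_iUnion₂.1 (ht hp)
    exact mem_iUnion.2 ⟨⟨i, hi⟩, hpi⟩
  obtain ⟨δ, hδ0, hleb⟩ := lebesgue_number_lemma_of_metric (c := fun i : {p // p ∈ t} => W i.1) hcomp (fun i => hWopen i.1) hcov'
  -- bound on the local constants
  obtain ⟨K₀, hK₀⟩ := ((t : Set (EuclideanSpace ℝ (Fin n))).toFinite.image K).bddAbove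
  set Kmax := max K₀ 0 with hKmax
  have hKle : ∀ i ∈ t, K i ≤ Kmax := fun i hi =>
    le_trans (hK₀ ⟨i, hi, rfl⟩) (le_max_left _ _)
  -- membership in a cover element gives a pair bound
  have hpair : ∀ i ∈ t, ∀ y ∈ D ∩ W i, ∀ z ∈ D ∩ W i, AdmPath D y z (K i * (2 * R)) := by
    intro i hi y hy z hz
    apply (hWpath i y hy z hz).mono
    exact mul_le_mul_of_nonneg_left (hnorm_le y hy.1 z hz.1) (hK0 i)
  -- Good indices: uniform bound on paths from y₀
  set Good : EuclideanSpace ℝ (Fin n) → Prop :=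
    fun i => ∃ B : ℝ, 0 ≤ B ∧ ∀ y ∈ D ∩ W i, AdmPath D y₀ y B with hGood
  have hadj : ∀ i ∈ t, ∀ j ∈ t, Good i → (D ∩ (W i ∩ W j)).Nonempty → Good j := by
    intro i hi j hj ⟨B, hB0, hB⟩ ⟨w, hwD, hwi, hwj⟩
    refine ⟨2 * max B (K j * (2 * R)), by
      have h := le_trans hB0 (le_max_left B (K j * (2 * R))); linarith, ?_⟩
    intro y hy
    exact (hB w ⟨hwD, hwi⟩).trans (hpair j hj w ⟨hwD, hwj⟩ y hy)
  have hDgood : ∀ y ∈ D, ∃ i ∈ t, Good i ∧ y ∈ W i := by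
    by_contra hcon
    push_neg at hcon
    obtain ⟨ybad, hybadD, hbad⟩ := hcon
    set U1 := ⋃ (i : EuclideanSpace ℝ (Fin n)) (_ : i ∈ t ∧ Good i), W i with hU1
    set U2 := ⋃ (i : EuclideanSpace ℝ (Fin n)) (_ : i ∈ t ∧ ¬ Good i), W i with hU2
    have h1 : IsOpen U1 := isOpen_iUnion fun i => isOpen_iUnion fun _ => hWopen i
    have h2 : IsOpen U2 := isOpen_iUnion fun i => isOpen_iUnion fun _ => hWopen i
    have hsub : D ⊆ U1 ∪ U2 := by
      intro y hy
      obtain ⟨i, hi, hyi⟩ := mem_iUnion₂.1 (ht (subset_closure hy))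
      by_cases hg : Good i
      · exact Or.inl (mem_iUnion₂.2 ⟨i, ⟨hi, hg⟩, hyi⟩)
      · exact Or.inr (mem_iUnion₂.2 ⟨i, ⟨hi, hg⟩, hyi⟩)
    have hne1 : (D ∩ U1).Nonempty := by
      obtain ⟨i, hi, hyi⟩ := mem_iUnion₂.1 (ht (subset_closure hy₀))
      have hgi : Good i := by
        refine ⟨K i * (2 * R), mul_nonneg (hK0 i) (by linarith), ?_⟩
        intro y hy
        exact hpair i hi y₀ ⟨hy₀, hyi⟩ y hy
      exact ⟨y₀, hy₀, mem_iUnion₂.2 ⟨i, ⟨hi, hgi⟩, hyi⟩⟩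
    have hne2 : (D ∩ U2).Nonempty := by
      obtain ⟨j, hj, hyj⟩ := mem_iUnion₂.1 (ht (subset_closure hybadD))
      have hgj : ¬ Good j := fun hg => hbad j hj hg hyj
      exact ⟨ybad, hybadD, mem_iUnion₂.2 ⟨j, ⟨hj, hgj⟩, hyj⟩⟩
    obtain ⟨w, hwD, hw1, hw2⟩ := hconn.isPreconnected U1 U2 h1 h2 hsub hne1 hne2
    obtain ⟨i, ⟨hi, hgi⟩, hwi⟩ := mem_iUnion₂.1 hw1
    obtain ⟨j, ⟨hj, hgj⟩, hwj⟩ := mem_iUnion₂.1 hw2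
    exact hgj (hadj i hi j hj hgi ⟨w, hwD, hwi, hwj⟩)
  -- a uniform bound B for all good indices in t
  set Bfun : EuclideanSpace ℝ (Fin n) → ℝ := fun i => if h : Good i then h.choose else 0
    with hBfun
  have hBspec : ∀ i, Good i → (0 ≤ Bfun i ∧ ∀ y ∈ D ∩ W i, AdmPath D y₀ y (Bfun i)) := by
    intro i h
    simp only [hBfun, dif_pos h]
    exact h.choose_spec
  obtain ⟨C₀, hC₀⟩ := ((t : Set (EuclideanSpace ℝ (Fin n))).toFinite.image Bfun).bddAbove
  set C := max C₀ 0 with hC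
  have hC0 : 0 ≤ C := le_max_right _ _
  have hBle : ∀ i ∈ t, Bfun i ≤ C := fun i hi =>
    le_trans (hC₀ ⟨i, hi, rfl⟩) (le_max_left _ _)
  -- uniform bound on geodesic distance
  have hfar : ∀ y ∈ D, ∀ z ∈ D, geodDist D y z ≤ 2 * C := by
    intro y hy z hz
    obtain ⟨i, hi, hgi, hyi⟩ := hDgood y hy
    obtain ⟨j, hj, hgj, hzj⟩ := hDgood z hz
    have h1 := ((hBspec i hgi).2 y ⟨hy, hyi⟩).symm
    have h2 := (hBspec j hgj).2 z ⟨hz, hzj⟩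
    apply le_trans (geodDist_le_admPath (h1.trans h2))
    have := max_le ((hBspec i hgi).1.trans (hBle i hi) |>.trans (le_refl C))
      ((hBle j hj))
    have hmax : max (Bfun i) (Bfun j) ≤ C := max_le (hBle i hi) (hBle j hj)
    linarith
  -- conclusion
  refine ⟨max Kmax (2 * C / δ) + 1, by positivity, ?_⟩
  intro x hx y hy
  have hκ1 : Kmax ≤ max Kmax (2 * C / δ) + 1 := le_trans (le_max_left _ _) (by linarith)
  have hκ2 : 2 * C / δ ≤ max Kmax (2 * C / δ) + 1 := le_trans (le_max_right _ _) (by linarith)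
  rcases lt_or_ge (dist x y) δ with hlt | hge
  · obtain ⟨i, hball⟩ := hleb x (subset_closure hx)
    have hxi : x ∈ W i.1 := hball (Metric.mem_ball_self hδ0)
    have hyi : y ∈ W i.1 := hball (by simpa [Metric.mem_ball, dist_comm] using hlt)
    have hp := hWpath i.1 x ⟨hx, hxi⟩ y ⟨hy, hyi⟩
    apply le_trans (geodDist_le_admPath hp)
    rw [norm_sub_rev]
    apply mul_le_mul_of_nonneg_right _ (norm_nonneg _)
    exact le_trans (hKle i.1 i.2) hκ1
  · apply le_trans (hfar x hx y hy)
    have hnd : δ ≤ ‖x - y‖ := by rwa [← dist_eq_norm]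
    calc 2 * C = (2 * C / δ) * δ := by field_simp
      _ ≤ (2 * C / δ) * ‖x - y‖ := by
          apply mul_le_mul_of_nonneg_left hnd (by positivity)
      _ ≤ (max Kmax (2 * C / δ) + 1) * ‖x - y‖ := by
          apply mul_le_mul_of_nonneg_right hκ2 (norm_nonneg _)
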